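/- Let Φ: (0,∞) → (0,∞) be increasing, unbounded, with Φ(s) → 0 as s → 0, satisfying Φ(4r) ≤ 16·Φ(r) and the lower scaling Φ(|x_n|)^{1−γ} = 2^{nd} for a sequence |x_n| > 2^n, and suppose h: ℝ^d → [0,∞) satisfies h(y) ≥ c₃ Φ(|x_n|)^{−γ} for y ∈ B(x_n, r_n − 1) where r_n = 2^{−n}|x_n| + 1, and G(x,y) ≥ C⁻¹|x−y|^{−d}Φ(|x−y|) for all x ≠ y. Then for every x with |x| ≤ 1, ∫_{ℝ^d} h(y) G(x,y) dy = ∞. -/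

import Mathlib

open MeasureTheory

set_option maxHeartbeats 1000000 in
/-- with `Φ` increasing, unbounded, vanishing at `0`, doubling
(`Φ(4r) ≤ 16 Φ(r)`), points `x_n` with `|x_n| > 2^n` and
`Φ(|x_n|)^{1−γ} = 2^{nd}`, radii `r_n = 2^{-n}|x_n| + 1`, `h ≥ c₃ Φ(|x_n|)^{-γ}`
on `B(x_n, r_n − 1)` and `G(x,y) ≥ C⁻¹ |x−y|^{-d} Φ(|x−y|)`, one has
`∫ h(y) G(x,y) dy = ∞` for every `|x| ≤ 1`. -/
theorem stmt18 (d : ℕ) (hd : 1 ≤ d) (γ : ℝ) (hγ0 : 0 < γ) (hγ1 : γ < 1)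
    (Φ : ℝ → ℝ) (hΦpos : ∀ s > (0:ℝ), 0 < Φ s)
    (hmono : ∀ s t : ℝ, 0 < s → s ≤ t → Φ s ≤ Φ t)
    (hunbdd : ∀ K : ℝ, ∃ s > (0:ℝ), K ≤ Φ s)
    (hΦ0 : Filter.Tendsto Φ (nhdsWithin 0 (Set.Ioi 0)) (nhds 0))
    (hdbl : ∀ r > (0:ℝ), Φ (4 * r) ≤ 16 * Φ r)
    (x : ℕ → EuclideanSpace ℝ (Fin d))
    (hx : ∀ n, (2:ℝ) ^ n < ‖x n‖)
    (hΦx : ∀ n, Φ ‖x n‖ ^ (1 - γ) = 2 ^ ((n : ℝ) * d))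
    (r : ℕ → ℝ) (hrdef : ∀ n, r n = 2 ^ (-(n:ℝ)) * ‖x n‖ + 1)
    (hdisj : Pairwise (Function.onFun Disjoint fun n => Metric.ball (x n) (r n)))
    (c₃ : ℝ) (hc₃ : 0 < c₃)
    (h : EuclideanSpace ℝ (Fin d) → ℝ) (hh_nn : ∀ y, 0 ≤ h y)
    (hh_meas : Measurable h)
    (hh : ∀ n, ∀ y ∈ Metric.ball (x n) (r n - 1), c₃ * Φ ‖x n‖ ^ (-γ) ≤ h y)
    (C : ℝ) (hC : 1 ≤ C)
    (G : EuclideanSpace ℝ (Fin d) → EuclideanSpace ℝ (Fin d) → ℝ)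
    (hG_nn : ∀ x y, 0 ≤ G x y) (hG_meas : ∀ x, Measurable (G x))
    (hG : ∀ x' y : EuclideanSpace ℝ (Fin d), x' ≠ y →
      C⁻¹ * (‖x' - y‖ ^ (-(d:ℝ)) * Φ ‖x' - y‖) ≤ G x' y) :
    ∀ x' : EuclideanSpace ℝ (Fin d), ‖x'‖ ≤ 1 →
      ∫⁻ y, ENNReal.ofReal (h y * G x' y) = ⊤ := by
  intro x' hx'
  haveI : Nonempty (Fin d) := ⟨⟨0, hd⟩⟩
  haveI : Nontrivial (EuclideanSpace ℝ (Fin d)) := by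
    have : Nontrivial ((Fin d) → ℝ) := inferInstance
    exact (WithLp.equiv 2 ((Fin d) → ℝ)).nontrivial
  -- positivity of C
  have hCpos : (0:ℝ) < C := lt_of_lt_of_le one_pos hC
  -- the constant
  set κ : ENNReal := ENNReal.ofReal (c₃ / (16 * C * 4 ^ d)) * volume (Metric.ball (0:EuclideanSpace ℝ (Fin d)) 1) with hκdef
  have hκpos : κ ≠ 0 := by
    apply mul_ne_zero
    · simp only [ne_eq, ENNReal.ofReal_eq_zero, not_le]
      positivity
    · exact (Metric.measure_ball_pos _ _ one_pos).ne'
  -- the sets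
  set S : ℕ → Set (EuclideanSpace ℝ (Fin d)) := fun n => Metric.ball (x (n+2)) (r (n+2) - 1) with hSdef
  have hSsub : ∀ n, S n ⊆ Metric.ball (x (n+2)) (r (n+2)) := fun n =>
    Metric.ball_subset_ball (by linarith)
  have hSdisj : Pairwise (Function.onFun Disjoint S) := by
    intro i j hij
    exact Disjoint.mono (hSsub i) (hSsub j)
      (hdisj (by omega : i + 2 ≠ j + 2))
  have hSmeas : ∀ n, MeasurableSet (S n) := fun n => measurableSet_ball
  -- basic facts about x m, m ≥ 2
  have key : ∀ n : ℕ, κ ≤ ∫⁻ y in S n, ENNReal.ofReal (h y * G x' y) := by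
    intro n
    set m := n + 2 with hm
    set X := ‖x m‖ with hX
    have hX4 : (4:ℝ) ≤ X := by
      have := hx m
      have h4 : (2:ℝ)^2 ≤ 2 ^ m := pow_le_pow_right₀ (by norm_num) (by omega)
      norm_num at h4
      linarith
    have hXpos : (0:ℝ) < X := by linarith
    have hΦX : (0:ℝ) < Φ X := hΦpos X hXpos
    -- radius
    set ρ : ℝ := 2 ^ (-(m:ℝ)) * X with hρ
    have hρpos : 0 < ρ := by positivity
    have hrm : r m - 1 = ρ := by rw [hrdef m]; ring
    have hρle : ρ ≤ X / 4 := by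
      have : (2:ℝ) ^ (-(m:ℝ)) ≤ 1/4 := by
        rw [show ((1:ℝ)/4) = 2 ^ (-(2:ℝ)) by
          rw [Real.rpow_neg (by norm_num), show ((2:ℝ))^(2:ℝ) = 4 by
            rw [show (2:ℝ) = ((2:ℕ):ℝ) by norm_num, Real.rpow_natCast]; norm_num]
          norm_num]
        apply Real.rpow_le_rpow_of_exponent_le (by norm_num)
        simp only [neg_le_neg_iff, hm]
        push_cast; linarith
      calc ρ ≤ (1/4) * X := by
              apply mul_le_mul_of_nonneg_right this hXpos.le
        _ = X / 4 := by ring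
    -- pointwise bound on S n
    have hpt : ∀ y ∈ S n, ENNReal.ofReal (c₃ * Φ X ^ (-γ) *
        (C⁻¹ * ((4*X) ^ (-(d:ℝ)) * (Φ X / 16)))) ≤ ENNReal.ofReal (h y * G x' y) := by
      intro y hy
      apply ENNReal.ofReal_le_ofReal
      have hyball : y ∈ Metric.ball (x m) (r m - 1) := hy
      have hdist : ‖y - x m‖ < ρ := by
        rw [← hrm]
        simpa [dist_eq_norm] using hyball
      have hynorm : (3/4) * X ≤ ‖y‖ := by
        have h1 : X - ρ ≤ ‖y‖ := by
          have := norm_sub_norm_le (x m) y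
          have h2 : ‖x m - y‖ = ‖y - x m‖ := norm_sub_rev _ _
          linarith [this, hdist]
        linarith [hρle]
      have hlow : X / 2 ≤ ‖x' - y‖ := by
        have h1 : ‖y‖ - ‖x'‖ ≤ ‖x' - y‖ := by
          have := norm_sub_norm_le y x'
          have h2 : ‖y - x'‖ = ‖x' - y‖ := norm_sub_rev _ _
          linarith
        linarith
      have hlowpos : (0:ℝ) < ‖x' - y‖ := by linarith
      have hne : x' ≠ y := by
        intro hxy
        rw [hxy, sub_self, norm_zero] at hlowpos
        exact lt_irrefl _ hlowpos
      have hup : ‖x' - y‖ ≤ 4 * X := by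
        have h1 : ‖x' - y‖ ≤ ‖x'‖ + ‖y‖ := norm_sub_le _ _
        have h2 : ‖y‖ ≤ X + ρ := by
          have := norm_le_norm_add_norm_sub' y (x m)
          have h3 : ‖y - x m‖ ≤ ρ := hdist.le
          calc ‖y‖ ≤ ‖x m‖ + ‖y - x m‖ := by
                have := norm_sub_le y (x m)
                have h4 := norm_le_insert' y (x m)
                linarith [norm_sub_rev y (x m) ▸ (norm_le_insert' (x m) y)]
            _ ≤ X + ρ := by rw [← hX]; linarith
        linarith [hρle]
      -- bound on G
      have hGy : C⁻¹ * ((4*X) ^ (-(d:ℝ)) * (Φ X / 16)) ≤ G x' y := by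
        refine le_trans ?_ (hG x' y hne)
        apply mul_le_mul_of_nonneg_left _ (by positivity)
        have hb1 : (4*X) ^ (-(d:ℝ)) ≤ ‖x' - y‖ ^ (-(d:ℝ)) :=
          Real.rpow_le_rpow_of_nonpos hlowpos hup (neg_nonpos.mpr (Nat.cast_nonneg d))
        have hb2 : Φ X / 16 ≤ Φ ‖x' - y‖ := by
          have hhalf : Φ X ≤ 16 * Φ (X / 2) := by
            have := hdbl (X/2) (by positivity)
            have h2 : Φ X ≤ Φ (4 * (X/2)) :=
              hmono X (4*(X/2)) hXpos (by linarith)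
            linarith
          have h3 : Φ (X/2) ≤ Φ ‖x' - y‖ :=
            hmono (X/2) _ (by positivity) hlow
          linarith
        calc (4*X) ^ (-(d:ℝ)) * (Φ X / 16)
            ≤ ‖x' - y‖ ^ (-(d:ℝ)) * (Φ X / 16) := by
              apply mul_le_mul_of_nonneg_right hb1 (by positivity)
          _ ≤ ‖x' - y‖ ^ (-(d:ℝ)) * Φ ‖x' - y‖ := by
              apply mul_le_mul_of_nonneg_left hb2 (by positivity)
      have hhy : c₃ * Φ X ^ (-γ) ≤ h y := hh m y hyball
      have h1 : (0:ℝ) ≤ c₃ * Φ X ^ (-γ) := by positivity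
      have h2 : (0:ℝ) ≤ C⁻¹ * ((4*X) ^ (-(d:ℝ)) * (Φ X / 16)) := by positivity
      exact mul_le_mul hhy hGy h2 (hh_nn y)
    -- integrate
    have hint : ENNReal.ofReal (c₃ * Φ X ^ (-γ) *
        (C⁻¹ * ((4*X) ^ (-(d:ℝ)) * (Φ X / 16)))) * volume (S n)
        ≤ ∫⁻ y in S n, ENNReal.ofReal (h y * G x' y) := by
      rw [← setLIntegral_const (S n)]
      exact setLIntegral_mono_ae (by
        exact ((hh_meas.mul (hG_meas x')).ennreal_ofReal).aemeasurable) (Filter.Eventually.of_forall hpt)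
    refine le_trans ?_ hint
    -- volume of the ball
    have hvol : volume (S n) = ENNReal.ofReal (ρ ^ d) * volume (Metric.ball (0:EuclideanSpace ℝ (Fin d)) 1) := by
      rw [hSdef]
      simp only
      rw [hrm, Measure.addHaar_ball volume _ hρpos.le, finrank_euclideanSpace_fin]
    rw [hvol, ← mul_assoc, ← ENNReal.ofReal_mul (by positivity)]
    rw [hκdef]
    apply mul_le_mul_left (ENNReal.ofReal_le_ofReal (le_of_eq ?_))
    -- the algebraic identity
    have hpow : Φ X ^ (-γ) * Φ X = 2 ^ ((m:ℝ) * d) := by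
      have : Φ X ^ (-γ) * Φ X = Φ X ^ (1 - γ) := by
        rw [show (1 - γ) = -γ + 1 by ring, Real.rpow_add hΦX, Real.rpow_one]
      rw [this, hΦx m]
    have hρd : ρ ^ d = (2 ^ ((m:ℝ) * d))⁻¹ * X ^ d := by
      rw [hρ, mul_pow, ← Real.rpow_natCast ((2:ℝ) ^ (-(m:ℝ))) d,
        ← Real.rpow_mul (by norm_num : (0:ℝ) ≤ 2),
        show -(m:ℝ) * d = -((m:ℝ) * d) by ring,
        Real.rpow_neg (by norm_num : (0:ℝ) ≤ 2)]
    have h4X : (4*X) ^ (-(d:ℝ)) = ((4:ℝ)^d)⁻¹ * (X^d)⁻¹ := by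
      rw [Real.rpow_neg (by positivity), Real.rpow_natCast, mul_pow, mul_inv]
    have h2pos : (0:ℝ) < 2 ^ ((m:ℝ) * d) := Real.rpow_pos_of_pos (by norm_num) _
    have hXd : (0:ℝ) < X ^ d := by positivity
    have h4d : (0:ℝ) < (4:ℝ) ^ d := by positivity
    calc c₃ / (16 * C * 4 ^ d)
        = (c₃ * (Φ X ^ (-γ) * Φ X)) * (C⁻¹ * (((4:ℝ)^d)⁻¹ * (X^d)⁻¹ * (1 / 16)))
          * ((2 ^ ((m:ℝ) * d))⁻¹ * X ^ d) := by
          rw [hpow]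
          field_simp
      _ = c₃ * Φ X ^ (-γ) * (C⁻¹ * ((4*X) ^ (-(d:ℝ)) * (Φ X / 16))) * ρ ^ d := by
          rw [h4X, hρd]; ring
  -- sum up
  have hsum : (⊤ : ENNReal) ≤ ∫⁻ y, ENNReal.ofReal (h y * G x' y) := by
    calc (⊤ : ENNReal) = ∑' _ : ℕ, κ := (ENNReal.tsum_const_eq_top_of_ne_zero hκpos).symm
      _ ≤ ∑' n, ∫⁻ y in S n, ENNReal.ofReal (h y * G x' y) :=
          ENNReal.tsum_le_tsum key
      _ = ∫⁻ y in ⋃ n, S n, ENNReal.ofReal (h y * G x' y) :=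
          (lintegral_iUnion hSmeas hSdisj _).symm
      _ ≤ ∫⁻ y, ENNReal.ofReal (h y * G x' y) :=
          setLIntegral_le_lintegral _ _
  exact top_le_iff.mp hsum
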